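/- arXiv:1407.1249 — 2 statements merged into one kernel-verified Lean document; each statement's English description precedes it below -/
import Mathlib

section
/- With M, N, h as in the context, the kernel of the linear map given by N equals the internal direct sum of the range of the linear map given by M and the line spanned by h; equivalently ker(N) = range(M) ⊔ ℚ·h with range(M) ∩ ℚ·h = 0. (This shows the cohomology H⁵ = ker d₀ / im d₀ of the weight-10 complex of ham⁰₂ is one-dimensional, spanned by the class of h.) -/
open Matrix

def Mt : Matrix (Fin 9) (Fin 12) ℚ :=
  !![-135/4, 0, -60, 15/2, -45, -15, 5/4, -45/4, 75/2, 0, 0, 0; 108/11, 18/11, 0, 0, 0, 60/11, 46/11, -90/11, 156/11, 0, 0, 0; 27/4, 0, 12, -9/2, -9, 0, 0, 0, 0, 27/4, 18, 0; 0, 0, -10, 2/3, -2, 2, 1, 0, 6, 4, -1, 0; 0, 5/2, 29, 47/3, -23, 43, 13/2, 9/2, 25, 16, -71/2, 0; 0, 5, 45, 155/6, -40, 65, 10, 0, 50, 20, -115/2, 0; 0, 3/2, 18, 23/2, -3, 30, 11/2, 9/2, 9, 6, -33, 0; 0, 0, 0, 0, 0, 6, 7, 0, -6, 0, 0, 0;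 0, 0, -6, -3, 0, 0, 0, 0, 0, 3, -6, 70]

def M : Matrix (Fin 12) (Fin 9) ℚ := Mt.transpose

def N : Matrix (Fin 4) (Fin 12) ℚ :=
  !![0, 140, 0, 0, 0, -15, 15, 30, 5/2, 0, 0, 0; -5, -4, 1/4, -11/2, 31/12, 31/6, -3, -2, 5/3, -1, 2, 0; -16, 32, -2, -12, 22/3, 58/3, -18, -12, -5/3, 0, 8, 0; 0, 0, 0, 42, 7, 0, 0, 0, 0, 0, 14, 3]

def h : Fin 12 → ℚ := ![0, 0, 0, 0, 0, 0, 0, 3, -36, -72, -3, 14]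

def rv : Fin 12 → ℚ := ![4/189, 109/63, -1/72, 1/36, -25/1512, -1/6, 1/7, 1/3, 0, 0, 0, 0]

def Pm : Matrix (Fin 9) (Fin 12) ℚ :=
  !![0, 0, 0, 0, -91/3645, -293/10206, 463/5670, -137/8505, -2279/102060, 92/8505, -422/25515, -16/8505; 0, 0, 0, 0, -431/40824, -13043/571536, 17501/63504, -9979/95256, -71341/1143072, 643/23814, -2201/142884, -59/23814; 0, 0, 0, 0, -601/56133, 39407/785862, -823/7938, -293/130977, 15709/1571724, -832/130977, 20662/392931, 626/130977; 0, 0, 0, 0, 4127/24948, 5651/349272, -667/3528, 34003/58212, 270001/698544, -2491/14553, 12827/87318, 290/14553; 0, 0, 0, 0, -3109/37422, -60715/523908, 3707/5292, -2339/87318, -185921/1047816, 3874/43659, -9799/130977, -446/43659; 0, 0, 0, 0, 8419/187110, 45497/523908, -12221/26460, 421/87318, 553103/5239080, -11614/218295, 27799/654885, 1292/218295; 0, 0, 0, 0, 0, 0, 0, 0, 0, 0, 0, 0; 0, 0, 0, 0, 0, 0, 0, 0, 0, 0, 0, 0; 0, 0, 0, 0, -1/2268, -25/31752, -5/3528, -29/5292,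 -155/63504, 5/1323, -13/7938, 37/2646]

def qv : Fin 12 → ℚ := ![0, 0, 0, 0, 5/2268, 125/31752, 25/3528, 145/5292, 775/63504, -25/1323, 65/7938, 2/1323]

def Km : Matrix (Fin 12) (Fin 4) ℚ :=
  !![0, -1/7, -1/56, -1/42; 1/140, 0, 0, 0; 4/35, 8/7, -5/14, 1/21; 0, 0, 0, 1/42; 0, 0, 0, 0; 0, 0, 0, 0; 0, 0, 0, 0; 0, 0, 0, 0; 0, 0, 0, 0; 0, 0, 0, 0; 0, 0, 0, 0; 0, 0, 0, 0]

lemma f2_1 : (1 : Fin 2) = (0 : Fin 1).succ := rfl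
lemma f3_1 : (1 : Fin 3) = (0 : Fin 2).succ := rfl
lemma f3_2 : (2 : Fin 3) = (1 : Fin 2).succ := rfl
lemma f4_1 : (1 : Fin 4) = (0 : Fin 3).succ := rfl
lemma f4_2 : (2 : Fin 4) = (1 : Fin 3).succ := rfl
lemma f4_3 : (3 : Fin 4) = (2 : Fin 3).succ := rfl
lemma f5_1 : (1 : Fin 5) = (0 : Fin 4).succ := rfl
lemma f5_2 : (2 : Fin 5) = (1 : Fin 4).succ := rfl
lemma f5_3 : (3 : Fin 5) = (2 : Fin 4).succ := rfl
lemma f5_4 : (4 : Fin 5) = (3 : Fin 4).succ := rfl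
lemma f6_1 : (1 : Fin 6) = (0 : Fin 5).succ := rfl
lemma f6_2 : (2 : Fin 6) = (1 : Fin 5).succ := rfl
lemma f6_3 : (3 : Fin 6) = (2 : Fin 5).succ := rfl
lemma f6_4 : (4 : Fin 6) = (3 : Fin 5).succ := rfl
lemma f6_5 : (5 : Fin 6) = (4 : Fin 5).succ := rfl
lemma f7_1 : (1 : Fin 7) = (0 : Fin 6).succ := rfl
lemma f7_2 : (2 : Fin 7) = (1 : Fin 6).succ := rfl
lemma f7_3 : (3 : Fin 7) = (2 : Fin 6).succ := rfl
lemma f7_4 : (4 : Fin 7) = (3 : Fin 6).succ := rfl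
lemma f7_5 : (5 : Fin 7) = (4 : Fin 6).succ := rfl
lemma f7_6 : (6 : Fin 7) = (5 : Fin 6).succ := rfl
lemma f8_1 : (1 : Fin 8) = (0 : Fin 7).succ := rfl
lemma f8_2 : (2 : Fin 8) = (1 : Fin 7).succ := rfl
lemma f8_3 : (3 : Fin 8) = (2 : Fin 7).succ := rfl
lemma f8_4 : (4 : Fin 8) = (3 : Fin 7).succ := rfl
lemma f8_5 : (5 : Fin 8) = (4 : Fin 7).succ := rfl
lemma f8_6 : (6 : Fin 8) = (5 : Fin 7).succ := rfl
lemma f8_7 : (7 : Fin 8) = (6 : Fin 7).succ := rfl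
lemma f9_1 : (1 : Fin 9) = (0 : Fin 8).succ := rfl
lemma f9_2 : (2 : Fin 9) = (1 : Fin 8).succ := rfl
lemma f9_3 : (3 : Fin 9) = (2 : Fin 8).succ := rfl
lemma f9_4 : (4 : Fin 9) = (3 : Fin 8).succ := rfl
lemma f9_5 : (5 : Fin 9) = (4 : Fin 8).succ := rfl
lemma f9_6 : (6 : Fin 9) = (5 : Fin 8).succ := rfl
lemma f9_7 : (7 : Fin 9) = (6 : Fin 8).succ := rfl
lemma f9_8 : (8 : Fin 9) = (7 : Fin 8).succ := rfl
lemma f10_1 : (1 : Fin 10) = (0 : Fin 9).succ := rfl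
lemma f10_2 : (2 : Fin 10) = (1 : Fin 9).succ := rfl
lemma f10_3 : (3 : Fin 10) = (2 : Fin 9).succ := rfl
lemma f10_4 : (4 : Fin 10) = (3 : Fin 9).succ := rfl
lemma f10_5 : (5 : Fin 10) = (4 : Fin 9).succ := rfl
lemma f10_6 : (6 : Fin 10) = (5 : Fin 9).succ := rfl
lemma f10_7 : (7 : Fin 10) = (6 : Fin 9).succ := rfl
lemma f10_8 : (8 : Fin 10) = (7 : Fin 9).succ := rfl
lemma f10_9 : (9 : Fin 10) = (8 : Fin 9).succ := rfl
lemma f11_1 : (1 : Fin 11) = (0 : Fin 10).succ := rfl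
lemma f11_2 : (2 : Fin 11) = (1 : Fin 10).succ := rfl
lemma f11_3 : (3 : Fin 11) = (2 : Fin 10).succ := rfl
lemma f11_4 : (4 : Fin 11) = (3 : Fin 10).succ := rfl
lemma f11_5 : (5 : Fin 11) = (4 : Fin 10).succ := rfl
lemma f11_6 : (6 : Fin 11) = (5 : Fin 10).succ := rfl
lemma f11_7 : (7 : Fin 11) = (6 : Fin 10).succ := rfl
lemma f11_8 : (8 : Fin 11) = (7 : Fin 10).succ := rfl
lemma f11_9 : (9 : Fin 11) = (8 : Fin 10).succ := rfl
lemma f11_10 : (10 : Fin 11) = (9 : Fin 10).succ := rfl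
lemma f12_1 : (1 : Fin 12) = (0 : Fin 11).succ := rfl
lemma f12_2 : (2 : Fin 12) = (1 : Fin 11).succ := rfl
lemma f12_3 : (3 : Fin 12) = (2 : Fin 11).succ := rfl
lemma f12_4 : (4 : Fin 12) = (3 : Fin 11).succ := rfl
lemma f12_5 : (5 : Fin 12) = (4 : Fin 11).succ := rfl
lemma f12_6 : (6 : Fin 12) = (5 : Fin 11).succ := rfl
lemma f12_7 : (7 : Fin 12) = (6 : Fin 11).succ := rfl
lemma f12_8 : (8 : Fin 12) = (7 : Fin 11).succ := rfl
lemma f12_9 : (9 : Fin 12) = (8 : Fin 11).succ := rfl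
lemma f12_10 : (10 : Fin 12) = (9 : Fin 11).succ := rfl
lemma f12_11 : (11 : Fin 12) = (10 : Fin 11).succ := rfl

attribute [local simp] f2_1 f3_1 f3_2 f4_1 f4_2 f4_3 f5_1 f5_2 f5_3 f5_4 f6_1 f6_2 f6_3 f6_4 f6_5 f7_1 f7_2 f7_3 f7_4 f7_5 f7_6 f8_1 f8_2 f8_3 f8_4 f8_5 f8_6 f8_7 f9_1 f9_2 f9_3 f9_4 f9_5 f9_6 f9_7 f9_8 f10_1 f10_2 f10_3 f10_4 f10_5 f10_6 f10_7 f10_8 f10_9 f11_1 f11_2 f11_3 f11_4 f11_5 f11_6 f11_7 f11_8 f11_9 f11_10 f12_1 f12_2 f12_3 f12_4 f12_5 f12_6 f12_7 f12_8 f12_9 f12_10 f12_11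

set_option maxHeartbeats 1000000 in
lemma keyNM : N * M = 0 := by
  show N * Mt.transpose = 0
  ext i j
  fin_cases i <;> fin_cases j <;>
    norm_num [Matrix.mul_apply, Fin.sum_univ_succ, Matrix.transpose_apply, Matrix.vecHead,
      Matrix.vecTail, N, Mt]

set_option maxHeartbeats 400000 in
lemma keyNh : N.mulVec h = 0 := by
  ext i
  fin_cases i <;>
    norm_num [Matrix.mulVec, dotProduct, Fin.sum_univ_succ, N, h]

set_option maxHeartbeats 400000 in
lemma keyrM : M.vecMul rv = 0 := by
  show Mt.transpose.vecMul rv = 0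
  ext j
  fin_cases j <;>
    norm_num [Matrix.vecMul, dotProduct, Fin.sum_univ_succ, Matrix.transpose_apply,
      Matrix.vecHead, Matrix.vecTail, Mt, rv]

lemma keyrh : rv ⬝ᵥ h = 1 := by
  norm_num [dotProduct, Fin.sum_univ_succ, rv, h]

set_option maxHeartbeats 4000000 in
lemma keyApply (x : Fin 12 → ℚ) :
    M *ᵥ (Pm *ᵥ x) + (qv ⬝ᵥ x) • h + Km *ᵥ (N *ᵥ x) = x := by
  ext i
  fin_cases i <;>
    (simp [Matrix.mulVec, dotProduct, Fin.sum_univ_succ, M, Mt, Pm, qv, h, Km, N,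
      Matrix.transpose_apply, Matrix.vecHead, Matrix.vecTail]; try ring)

theorem stmt6 :
    LinearMap.ker N.mulVecLin = LinearMap.range M.mulVecLin ⊔ Submodule.span ℚ {h} ∧
    LinearMap.range M.mulVecLin ⊓ Submodule.span ℚ {h} = ⊥ := by
  constructor
  · apply le_antisymm
    · intro x hx
      simp only [LinearMap.mem_ker, Matrix.mulVecLin_apply] at hx
      have hid := keyApply x
      rw [hx, Matrix.mulVec_zero, add_zero] at hid
      rw [← hid]
      apply Submodule.add_mem_sup
      · exact ⟨Pm.mulVec x, rfl⟩
      · exact Submodule.smul_mem _ _ (Submodule.mem_span_singleton_self h)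
    · apply sup_le
      · rintro x ⟨y, rfl⟩
        simp only [LinearMap.mem_ker, Matrix.mulVecLin_apply, Matrix.mulVec_mulVec,
          keyNM, Matrix.zero_mulVec]
      · rw [Submodule.span_singleton_le_iff_mem]
        simp [LinearMap.mem_ker, keyNh]
  · rw [eq_bot_iff]
    rintro x ⟨⟨y, rfl⟩, hx2⟩
    obtain ⟨c, hc⟩ := Submodule.mem_span_singleton.mp hx2
    have h0 : rv ⬝ᵥ (c • h) = 0 := by
      rw [hc]
      simp only [Matrix.mulVecLin_apply, Matrix.dotProduct_mulVec, keyrM,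
        zero_dotProduct]
    rw [dotProduct_smul, keyrh, smul_eq_mul, mul_one] at h0
    rw [Submodule.mem_bot, ← hc, h0, zero_smul]
end

section
/- The quotient vector space ker(N̄.mulVecLin) / (range(M̄.mulVecLin) viewed as a subspace of the kernel) is one-dimensional over ℚ, where M̄ and N̄ are the explicit matrices of the context satisfying N̄·M̄ = 0. (This is the computation dim H⁷(ham₂)₈ = 1, recovering the one-dimensionality of the Gel'fand–Kalinin–Fuks cohomology group.) -/
open Matrix

def Mbt : Matrix (Fin 18) (Fin 14) ℚ :=
  !![135/4, 0, -20, -60, 15, 5/4, -135/4, -15, -15, 0, 0, 0, 0, 0; -18, -12, 0, 0, 0, 23/3, -45, 21, 10, 0, 0, 0, 0, 0; -27/4, 0, -20, 12, 3, 0, 0, 0, 0, 63/8, -18, 0, 0, 0; 0, 0, 2, -10, 2/3, 1, 2, -1/3, 2, -7, 1, 0, 0, 0; 0, -11/2, -17, 9, 71/12, 7/8, 51/8, 233/12, 10, -49/4, 4, 0, 0, 0; 0, -1/3, -9, 5, 49/18, 5/12, 55/4, 47/9, 19/3, -28/3, -1/6, 0, 0, 0; 0, -5/2, -20, 0, 65/12,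 -15/8, -75/8, 65/12, -5, 35/4, -25/2, 0, 0, 0; 0, 0, 0, 0, 0, 7, -18, -9, 6, 0, 0, 0, 0, 0; 0, 0, -2, -6, 0, 0, 0, 0, 0, -21/2, 6, 70, 0, 0; -1/2, 2, -2, 14/3, 1/3, 0, 0, 0, 0, 0, 0, 0, -28, -14/3; -5/2, 2, 0, 16/3, -1/3, 0, 0, 0, 0, 0, 0, 0, -28, -28/3; 0, 8, 0, 0, 0, -3, 0, 1, -6, 0, 0, 0, -112, 0; 0, 0, 0, 0, 0, -1, 15, -6, 0, -3/2, -3, 0, 48, -14; 0, 0, 0, 0, 0, -2/3, -1, -1, -2, 5/2, -1, 0, 4, -14/3; 0, 0, 0, 0, 4/3, 11/3, -45, 46/3, 0, 5/2, 11, 0, -136, 14; 0, 0, 2, 0, -1, -3/2, 123/8, -4, 0, -21/16, -33/16, 0, 42, -21/8; 0, 0, 0, 2, -1/3, -1/2, 39/8, -4/3, 0, 7/16, -13/16, 0, 14, -35/24; 0, 0, 0, 0, 0, 0, 0, 0, 0, 1, -1, -20/3, 0, 2]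

def Mb : Matrix (Fin 14) (Fin 18) ℚ := Mbt.transpose

def Nb : Matrix (Fin 4) (Fin 14) ℚ :=
  !![0, -35, 0, 0, 0, -30, 0, -15, 25/2, 0, 0, 0, -5/2, 0; 11, -9, -39/8, -31/8, -61/2, -75, -10, -10, 85/2, -2/3, -20/3, 0, -1, -3; -16, 8, 9, 5, 52, 20, 8/3, -2, -55/3, 0, 8, 0, 1, 4; 0, 0, 63/2, 21/2, 84, 0, 0, 0, 0, 0, -14, 3, 0, 3]

def Hb : Type :=
  LinearMap.ker Nb.mulVecLin ⧸
    (Submodule.comap (LinearMap.ker Nb.mulVecLin).subtype (LinearMap.range Mb.mulVecLin))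

noncomputable instance : AddCommGroup Hb := by unfold Hb; infer_instance
noncomputable instance : Module ℚ Hb := by unfold Hb; infer_instance

def Mc : Matrix (Fin 14) (Fin 18) ℚ := !![135/4, -18, -27/4, 0, 0, 0, 0, 0, 0, -1/2, -5/2, 0, 0, 0, 0, 0, 0, 0; 0, -12, 0, 0, -11/2, -1/3, -5/2, 0, 0, 2, 2, 8, 0, 0, 0, 0, 0, 0; -20, 0, -20, 2, -17, -9, -20, 0, -2, -2, 0, 0, 0, 0, 0, 2, 0, 0; -60, 0, 12, -10, 9, 5, 0, 0, -6, 14/3, 16/3, 0, 0, 0, 0, 0, 2, 0; 15, 0, 3, 2/3, 71/12, 49/18, 65/12, 0, 0, 1/3, -1/3, 0, 0, 0, 4/3, -1, -1/3, 0; 5/4, 23/3, 0, 1, 7/8, 5/12, -15/8, 7, 0, 0, 0, -3, -1, -2/3, 11/3, -3/2, -1/2, 0; -135/4, -45, 0, 2, 51/8, 55/4, -75/8, -18, 0, 0, 0, 0, 15, -1, -45, 123/8, 39/8, 0; -15, 21, 0, -1/3, 233/12, 47/9, 65/12, -9, 0, 0, 0, 1, -6, -1, 46/3, -4, -4/3,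 0; -15, 10, 0, 2, 10, 19/3, -5, 6, 0, 0, 0, -6, 0, -2, 0, 0, 0, 0; 0, 0, 63/8, -7, -49/4, -28/3, 35/4, 0, -21/2, 0, 0, 0, -3/2, 5/2, 5/2, -21/16, 7/16, 1; 0, 0, -18, 1, 4, -1/6, -25/2, 0, 6, 0, 0, 0, -3, -1, 11, -33/16, -13/16, -1; 0, 0, 0, 0, 0, 0, 0, 0, 70, 0, 0, 0, 0, 0, 0, 0, 0, -20/3; 0, 0, 0, 0, 0, 0, 0, 0, 0, -28, -28, -112, 48, 4, -136, 42, 14, 0; 0, 0, 0, 0, 0, 0, 0, 0, 0, -14/3, -28/3, 0, -14, -14/3, 14, -21/8, -35/24, 2]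

def P : Matrix (Fin 14) (Fin 9) ℚ := !![135/4, -18, -27/4, 0, 0, 0, 0, -1/2, -5/2; 0, -12, 0, 0, -11/2, -1/3, 0, 2, 2; -20, 0, -20, 2, -17, -9, -2, -2, 0; -60, 0, 12, -10, 9, 5, -6, 14/3, 16/3; 15, 0, 3, 2/3, 71/12, 49/18, 0, 1/3, -1/3; 5/4, 23/3, 0, 1, 7/8, 5/12, 0, 0, 0; -135/4, -45, 0, 2, 51/8, 55/4, 0, 0, 0; -15, 21, 0, -1/3, 233/12, 47/9, 0, 0, 0; -15, 10, 0, 2, 10, 19/3, 0, 0, 0; 0, 0, 63/8, -7, -49/4, -28/3, -21/2, 0, 0; 0, 0, -18, 1, 4, -1/6, 6, 0, 0; 0, 0, 0, 0, 0, 0, 70, 0, 0; 0, 0, 0, 0, 0, 0, 0, -28, -28; 0, 0, 0, 0, 0, 0, 0, -14/3, -28/3]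

def Q : Matrix (Fin 9) (Fin 18) ℚ := !![1, 0, 0, 0, 0, 0, 0, 8/15, 0, 0, 0, -64/135, 44/189, 118/2835, -88/315, 1/45, 11/405, -8/315; 0, 1, 0, 0, 0, 0, -3/7, 7/5, 0, 0, 0, -269/315, 1/441, -487/6615, 187/735, -37/240, -239/15120, -13/735; 0, 0, 1, 0, 0, 0, 8/7, -16/15, 0, 0, 0, 752/945, -148/1323, 1516/19845, -236/2205, 1/45, -73/2835, 104/2205; 0, 0, 0, 1, 0, 0, 9/7, -21/5, 0, 0, 0, 479/105, -232/147, -353/2205, 618/245, -19/40, -1193/2520, 48/245; 0, 0, 0, 0, 1, 0, 11/7, -52/15, 0, 0, 0, 2084/945, -1012/1323, 2452/19845, 1076/735, -47/180, -2029/11340, 12/245; 0, 0, 0, 0, 0, 1, -3, 34/5, 0, 0, 0, -254/45, 142/63, -232/945, -146/35, 103/120, 563/1080, -6/35; 0, 0, 0, 0, 0, 0, 0, 0, 1, 0, 0, 0, 0, 0, 0, 0, 0, -2/21; 0, 0, 0, 0, 0, 0, 0, 0, 0, 1, 0, 8, -45/7, -9/7, 89/7, -57/16, -21/16, 3/7;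 0, 0, 0, 0, 0, 0, 0, 0, 0, 0, 1, -4, 33/7, 8/7, -55/7, 33/16, 13/16, -3/7]

def L : Matrix (Fin 9) (Fin 14) ℚ := !![-1898/212625, -12701/189000, 4099/108000, 10301/324000, 3259/18900, -661/15750, -299/20250, -421/6750, 0, -8/315, 0, 0, 0, 0; 83/7938, -991/17640, 101/10080, 167/6048, 58/2205, 89/735, -19/1890, -13/315, 0, -13/735, 0, 0, 0, 0; -13816/297675, 5087/66150, -2683/37800, -6677/113400, -877/6615, -466/11025, 226/14175, 254/4725, 0, 104/2205, 0, 0, 0, 0; -386/6615, 3469/5880, -563/3360, -2893/10080, -1807/2940, 19/98, 61/630, 89/210, 0, 48/245, 0, 0, 0, 0; -8434/297675, 5134/33075, -134/4725, -1081/14175, -101/1323, -2914/11025, 64/14175, 806/4725, 0, 12/245, 0, 0, 0, 0; 481/14175, -6383/12600, 1177/7200, 5303/21600, 799/1260, 407/1050, -17/1350, -193/450, 0, -6/35, 0, 0, 0, 0; 11/1575, -93/1400, -43/800, 43/2400, -23/140, -69/350, -7/150, -3/50, 0, -2/21, 0, 0, 0, 0; 121/210, 851/560, -249/320, -157/320,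 -171/56, 243/140, 3/20, 21/20, 0, 3/7, 0, 0, 0, 0; -41/70, -71/70, 63/80, 39/80, 87/28, -117/70, -1/5, -9/10, 0, -3/7, 0, 0, 0, 0]

def R : Matrix (Fin 18) (Fin 9) ℚ := !![1, 0, 0, 0, 0, 0, 0, 0, 0; 0, 1, 0, 0, 0, 0, 0, 0, 0; 0, 0, 1, 0, 0, 0, 0, 0, 0; 0, 0, 0, 1, 0, 0, 0, 0, 0; 0, 0, 0, 0, 1, 0, 0, 0, 0; 0, 0, 0, 0, 0, 1, 0, 0, 0; 0, 0, 0, 0, 0, 0, 0, 0, 0; 0, 0, 0, 0, 0, 0, 0, 0, 0; 0, 0, 0, 0, 0, 0, 1, 0, 0; 0, 0, 0, 0, 0, 0, 0, 1, 0; 0, 0, 0, 0, 0, 0, 0, 0, 1; 0, 0, 0, 0, 0, 0, 0, 0, 0; 0, 0, 0, 0, 0, 0, 0, 0, 0; 0, 0, 0, 0, 0, 0, 0, 0, 0; 0, 0, 0, 0, 0, 0, 0, 0, 0; 0, 0, 0, 0, 0, 0, 0, 0, 0; 0, 0, 0, 0, 0, 0, 0, 0, 0; 0, 0, 0, 0,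 0, 0, 0, 0, 0]

def R4 : Matrix (Fin 14) (Fin 4) ℚ := !![0, -1/7, -9/56, 1/42; -1/35, 0, 0, 0; -4/105, 8/21, 11/42, 1/63; 4/35, -8/7, -11/14, 1/21; 0, 0, 0, 0; 0, 0, 0, 0; 0, 0, 0, 0; 0, 0, 0, 0; 0, 0, 0, 0; 0, 0, 0, 0; 0, 0, 0, 0; 0, 0, 0, 0; 0, 0, 0, 0; 0, 0, 0, 0]


lemma hMb : Mb = Mc := by
  ext i j
  fin_cases i <;> fin_cases j <;> rfl

set_option maxHeartbeats 4000000 in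
lemma hNM : Nb * Mc = 0 := by
  ext i j
  fin_cases i <;> fin_cases j <;>
    norm_num [Nb, Mc, Matrix.mul_apply, Fin.sum_univ_succ]

set_option maxHeartbeats 4000000 in
lemma hPQ : Mc = P * Q := by
  ext i j
  fin_cases i <;> fin_cases j <;>
    norm_num [Mc, P, Q, Matrix.mul_apply, Fin.sum_univ_succ]

set_option maxHeartbeats 4000000 in
lemma hLP : L * P = 1 := by
  ext i j
  fin_cases i <;> fin_cases j <;>
    norm_num [L, P, Matrix.mul_apply, Fin.sum_univ_succ, Matrix.one_apply, Fin.ext_iff]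

set_option maxHeartbeats 4000000 in
lemma hQR : Q * R = 1 := by
  ext i j
  fin_cases i <;> fin_cases j <;>
    norm_num [Q, R, Matrix.mul_apply, Fin.sum_univ_succ, Matrix.one_apply, Fin.ext_iff]

set_option maxHeartbeats 4000000 in
lemma hNR : Nb * R4 = 1 := by
  ext i j
  fin_cases i <;> fin_cases j <;>
    norm_num [Nb, R4, Matrix.mul_apply, Fin.sum_univ_succ, Matrix.one_apply, Fin.ext_iff]

lemma rankMc : Mc.rank = 9 := by
  refine le_antisymm ?_ ?_
  · rw [hPQ]
    exact le_trans (Matrix.rank_mul_le_left P Q) (Matrix.rank_le_width P)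
  · have h1 : (L * Mc * R).rank = 9 := by
      rw [hPQ, ← Matrix.mul_assoc, Matrix.mul_assoc, hLP, hQR, one_mul, Matrix.rank_one]
      simp
    calc (9 : ℕ) = (L * Mc * R).rank := h1.symm
      _ ≤ (L * Mc).rank := Matrix.rank_mul_le_left _ _
      _ ≤ Mc.rank := Matrix.rank_mul_le_right _ _

lemma rankNb : Nb.rank = 4 := by
  refine le_antisymm (Matrix.rank_le_height Nb) ?_
  have h1 : (Nb * R4).rank = 4 := by rw [hNR, Matrix.rank_one]; simp
  calc (4 : ℕ) = (Nb * R4).rank := h1.symm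
    _ ≤ Nb.rank := Matrix.rank_mul_le_left Nb R4

set_option synthInstance.maxHeartbeats 1000000 in
theorem stmt15 : Module.finrank ℚ Hb = 1 := by
  classical
  have hle : LinearMap.range Mb.mulVecLin ≤ LinearMap.ker Nb.mulVecLin := by
    rintro x ⟨y, rfl⟩
    have h0 : Nb.mulVecLin (Mb.mulVecLin y) = 0 := by
      have : (Nb * Mb).mulVecLin y = 0 := by rw [hMb, hNM]; simp
      rwa [Matrix.mulVecLin_mul] at this
    exact h0
  have hfs : Module.finrank ℚ
      (Submodule.comap (LinearMap.ker Nb.mulVecLin).subtype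
        (LinearMap.range Mb.mulVecLin)) = 9 := by
    rw [(Submodule.comapSubtypeEquivOfLe hle).finrank_eq]
    have h9 : Module.finrank ℚ (LinearMap.range Mb.mulVecLin) = Mb.rank := rfl
    rw [h9, hMb, rankMc]
  have hfk : Module.finrank ℚ (LinearMap.ker Nb.mulVecLin) = 10 := by
    have h1 := LinearMap.finrank_range_add_finrank_ker Nb.mulVecLin
    have h2 : Module.finrank ℚ (LinearMap.range Nb.mulVecLin) = 4 := rankNb
    rw [h2, Module.finrank_fin_fun] at h1
    omega
  have hq := Submodule.finrank_quotient_add_finrank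
    (Submodule.comap (LinearMap.ker Nb.mulVecLin).subtype (LinearMap.range Mb.mulVecLin))
  rw [hfk, hfs] at hq
  have hHb : Module.finrank ℚ Hb = Module.finrank ℚ
      (LinearMap.ker Nb.mulVecLin ⧸
        Submodule.comap (LinearMap.ker Nb.mulVecLin).subtype
          (LinearMap.range Mb.mulVecLin)) := rfl
  rw [hHb]
  omega
end
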